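/- arXiv:2403.09103 — 3 statements merged into one kernel-verified Lean document; each statement's English description precedes it below -/
import Mathlib

section
/- With the setup below, for every homogeneous u ∈ V and every v ∈ V: Φ(C(u), v) + 2·Σ_{i=1}^N (−1)^{|X_i||u|} Φ(X_i(u), X_i^∨(v)) = −Φ(u, C(v)). (This is the computation underlying the compatibility of the affine dot with the cap in the action of the affine Frobenius Brauer category.) -/
/-- `X` is a homogeneous endomorphism of parity `p` with respect to the grading `𝒱`. -/
def homE {k V : Type*} [Field k] [AddCommGroup V] [Module k V]
    (𝒱 : ZMod 2 → Submodule k V) (p : ZMod 2) (X : Module.End k V) : Prop :=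
  ∀ (i : ZMod 2), ∀ v ∈ 𝒱 i, X v ∈ 𝒱 (i + p)

/-- With the same setup, for homogeneous `u` and all `v`:
`Φ(C u, v) + 2 Σ_i (−1)^{|X_i||u|} Φ(X_i u, X_i^∨ v) = −Φ(u, C v)`. -/
theorem stmt11 (k : Type*) [Field k] (hchar : (2 : k) ≠ 0)
    (V : Type*) [AddCommGroup V] [Module k V] [FiniteDimensional k V]
    (𝒱 : ZMod 2 → Submodule k V) [DirectSum.Decomposition 𝒱]
    (Φ : V →ₗ[k] V →ₗ[k] k)
    (g : Submodule k (Module.End k V))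
    (hg_skew : ∀ Y ∈ g, ∀ p : ZMod 2, homE 𝒱 p Y →
      ∀ (i j : ZMod 2), ∀ u ∈ 𝒱 i, ∀ v ∈ 𝒱 j,
        Φ (Y u) v = -((-1 : k) ^ (p.val * i.val)) * Φ u (Y v))
    (Bf : Module.End k V →ₗ[k] Module.End k V →ₗ[k] k)
    (hB_even : ∀ (p q : ZMod 2), ∀ X ∈ g, ∀ Y ∈ g,
      homE 𝒱 p X → homE 𝒱 q Y → p ≠ q → Bf X Y = 0)
    (hB_symm : ∀ (p q : ZMod 2), ∀ X ∈ g, ∀ Y ∈ g,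
      homE 𝒱 p X → homE 𝒱 q Y →
      Bf X Y = (-1 : k) ^ (p.val * q.val) * Bf Y X)
    (N : ℕ) (X Xd : Fin N → Module.End k V) (px : Fin N → ZMod 2)
    (hXg : ∀ i, X i ∈ g) (hXdg : ∀ i, Xd i ∈ g)
    (hXhom : ∀ i, homE 𝒱 (px i) (X i))
    (hXdhom : ∀ i, homE 𝒱 (px i) (Xd i))
    (hXli : LinearIndependent k X)
    (hXspan : Submodule.span k (Set.range X) = g)
    (hdual : ∀ i j, Bf (Xd i) (X j) = if i = j then (1 : k) else 0)
    (C : Module.End k V) (hC : C = ∑ i, X i * Xd i) :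
    ∀ (p : ZMod 2), ∀ u ∈ 𝒱 p, ∀ v : V,
      Φ (C u) v + 2 * ∑ i, (-1 : k) ^ ((px i).val * p.val) * Φ (X i u) (Xd i v)
        = - Φ u (C v) := by
  intro p u hu v
  have hz : ∀ x : ZMod 2, x = 0 ∨ x = 1 := by decide
  -- skew-symmetry for arbitrary second argument
  have hsup : (⨆ i, 𝒱 i) = ⊤ :=
    (DirectSum.Decomposition.isInternal 𝒱).submodule_iSup_eq_top
  have skew : ∀ Y ∈ g, ∀ q : ZMod 2, homE 𝒱 q Y →
      ∀ (i : ZMod 2), ∀ u' ∈ 𝒱 i, ∀ w : V,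
        Φ (Y u') w = -((-1 : k) ^ (q.val * i.val)) * Φ u' (Y w) := by
    intro Y hY q hq i u' hu' w
    have hw : w ∈ ⨆ j, 𝒱 j := hsup ▸ Submodule.mem_top
    refine Submodule.iSup_induction 𝒱
      (motive := fun w => Φ (Y u') w = -((-1 : k) ^ (q.val * i.val)) * Φ u' (Y w)) hw ?_ ?_ ?_
    · exact fun j x hx => hg_skew Y hY q hq i j u' hu' x hx
    · simp
    · intro x y ihx ihy
      simp only [map_add, mul_add, ihx, ihy]
  -- expansion of Xd i in terms of the X j
  have hXd_expand : ∀ i, Xd i = ∑ j, Bf (Xd j) (Xd i) • X j := by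
    intro i
    have h1 : Xd i ∈ Submodule.span k (Set.range X) := hXspan ▸ hXdg i
    obtain ⟨c, hc⟩ := (Submodule.mem_span_range_iff_exists_fun k).mp h1
    have hcoef : ∀ j, Bf (Xd j) (Xd i) = c j := by
      intro j
      rw [← hc, map_sum]
      simp [hdual, Finset.sum_ite_eq]
    conv_lhs => rw [← hc]
    exact Finset.sum_congr rfl fun j _ => by rw [hcoef j]
  -- supersymmetry for the coefficients
  have ha_symm : ∀ i j, Bf (Xd i) (Xd j) = (-1 : k) ^ ((px i).val) * Bf (Xd j) (Xd i) := by
    intro i j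
    by_cases hpe : px i = px j
    · have h := hB_symm (px i) (px j) (Xd i) (hXdg i) (Xd j) (hXdg j) (hXdhom i) (hXdhom j)
      rw [h]
      congr 1
      rw [← hpe]
      rcases hz (px i) with h0 | h1
      · rw [h0]; simp
      · rw [h1]; simp [ZMod.val_one]
    · rw [hB_even (px i) (px j) _ (hXdg i) _ (hXdg j) (hXdhom i) (hXdhom j) hpe,
        hB_even (px j) (px i) _ (hXdg j) _ (hXdg i) (hXdhom j) (hXdhom i) (Ne.symm hpe)]
      ring
  -- the key endomorphism identity
  have key : (∑ i, ((-1 : k) ^ ((px i).val)) • (Xd i * X i)) = C := by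
    rw [hC]
    calc ∑ i, ((-1 : k) ^ ((px i).val)) • (Xd i * X i)
        = ∑ i, ∑ j, ((-1 : k) ^ ((px i).val) * Bf (Xd j) (Xd i)) • (X j * X i) := by
          refine Finset.sum_congr rfl fun i _ => ?_
          conv_lhs => rw [hXd_expand i]
          rw [Finset.sum_mul, Finset.smul_sum]
          exact Finset.sum_congr rfl fun j _ => by rw [smul_mul_assoc, smul_smul]
      _ = ∑ i, ∑ j, (Bf (Xd i) (Xd j)) • (X j * X i) := by
          refine Finset.sum_congr rfl fun i _ => Finset.sum_congr rfl fun j _ => ?_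
          rw [ha_symm i j]
      _ = ∑ j, ∑ i, (Bf (Xd i) (Xd j)) • (X j * X i) := Finset.sum_comm
      _ = ∑ j, X j * Xd j := by
          refine Finset.sum_congr rfl fun j _ => ?_
          conv_rhs => rw [hXd_expand j]
          rw [Finset.mul_sum]
          exact Finset.sum_congr rfl fun i _ => by rw [mul_smul_comm]
  -- first term
  have h1 : Φ (C u) v = ∑ i, (-1 : k) ^ ((px i).val) * Φ u ((Xd i) ((X i) v)) := by
    rw [hC]
    have : (∑ i, X i * Xd i) u = ∑ i, (X i) ((Xd i) u) := by
      simp [Module.End.mul_apply, LinearMap.sum_apply]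
    rw [this, map_sum, LinearMap.sum_apply]
    refine Finset.sum_congr rfl fun i _ => ?_
    rw [skew (X i) (hXg i) (px i) (hXhom i) (p + px i) ((Xd i) u) (hXdhom i p u hu) v,
      skew (Xd i) (hXdg i) (px i) (hXdhom i) p u hu ((X i) v)]
    have hsgn : ((-1 : k) ^ ((px i).val * (p + px i).val)) *
        ((-1 : k) ^ ((px i).val * p.val)) = (-1 : k) ^ ((px i).val) := by
      rcases hz (px i) with h0 | h0 <;> rcases hz p with hp0 | hp0 <;> rw [h0, hp0] <;>
        norm_num [show ((1 : ZMod 2) + 1).val = 0 from rfl, show ((2 : ZMod 2)).val = 0 by decide,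
          show ((0 : ZMod 2) + 1).val = 1 from rfl, show ((0 : ZMod 2) + 0).val = 0 from rfl,
          show ((1 : ZMod 2) + 0).val = 1 from rfl, ZMod.val_one, ZMod.val_zero]
    calc -((-1 : k) ^ ((px i).val * (p + px i).val)) *
          (-((-1 : k) ^ ((px i).val * p.val)) * Φ u ((Xd i) ((X i) v)))
        = (((-1 : k) ^ ((px i).val * (p + px i).val)) *
            ((-1 : k) ^ ((px i).val * p.val))) * Φ u ((Xd i) ((X i) v)) := by ring
      _ = (-1 : k) ^ ((px i).val) * Φ u ((Xd i) ((X i) v)) := by rw [hsgn]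
  -- middle term
  have h2 : ∀ i : Fin N, (-1 : k) ^ ((px i).val * p.val) * Φ ((X i) u) ((Xd i) v)
      = - Φ u ((X i) ((Xd i) v)) := by
    intro i
    rw [skew (X i) (hXg i) (px i) (hXhom i) p u hu ((Xd i) v)]
    have : ((-1 : k) ^ ((px i).val * p.val)) * ((-1 : k) ^ ((px i).val * p.val)) = 1 := by
      rw [← pow_add, Even.neg_one_pow ⟨(px i).val * p.val, rfl⟩]
    calc (-1 : k) ^ ((px i).val * p.val) *
          (-((-1 : k) ^ ((px i).val * p.val)) * Φ u ((X i) ((Xd i) v)))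
        = -((((-1 : k) ^ ((px i).val * p.val)) * ((-1 : k) ^ ((px i).val * p.val))) *
            Φ u ((X i) ((Xd i) v))) := by ring
      _ = - Φ u ((X i) ((Xd i) v)) := by rw [this, one_mul]
  -- the two sums on the right
  have h3 : ∑ i, (-1 : k) ^ ((px i).val) * Φ u ((Xd i) ((X i) v)) = Φ u (C v) := by
    rw [← key]
    rw [LinearMap.sum_apply, map_sum]
    refine Finset.sum_congr rfl fun i _ => ?_
    rw [LinearMap.smul_apply, map_smul, Module.End.mul_apply, smul_eq_mul]
  have h4 : ∑ i, Φ u ((X i) ((Xd i) v)) = Φ u (C v) := by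
    rw [hC, LinearMap.sum_apply, map_sum]
    exact Finset.sum_congr rfl fun i _ => by rw [Module.End.mul_apply]
  rw [h1, h3]
  have : ∑ i, (-1 : k) ^ ((px i).val * p.val) * Φ ((X i) u) ((Xd i) v)
      = - ∑ i, Φ u ((X i) ((Xd i) v)) := by
    rw [← Finset.sum_neg_distrib]
    exact Finset.sum_congr rfl fun i _ => h2 i
  rw [this, h4]
  ring
end

section
/- With the setup below: (i) B restricts to a nondegenerate bilinear form on the (−1)-eigenspace E₋ of σ; and (ii) for any basis (X_i) of E₋ with family (X_i^∨) in E₋ satisfying B(X_i^∨, X_j) = δ_{ij}, and any basis (Y_j) of E with left dual basis (Y_j^∨), one has 2·Σ_i X_i ⊗ X_i^∨ = Σ_j Y_j ⊗ Y_j^∨ − Σ_j σ(Y_j) ⊗ Y_j^∨ in E ⊗_k E. -/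
open scoped TensorProduct

/-- For a nondegenerate bilinear form `B` on a finite-dimensional space `E` and an
isometric involution `σ`, (i) `B` restricts nondegenerately to the `(−1)`-eigenspace `E₋` of `σ`,
and (ii) for dual families `(X_i), (X_i^∨)` in `E₋` and a basis `(Y_j)` of `E` with left dual
basis `(Y_j^∨)`: `2 Σ_i X_i ⊗ X_i^∨ = Σ_j Y_j ⊗ Y_j^∨ − Σ_j σ(Y_j) ⊗ Y_j^∨` in `E ⊗_k E`. -/
theorem stmt12 (k : Type*) [Field k] (hchar : (2 : k) ≠ 0)
    (E : Type*) [AddCommGroup E] [Module k E] [FiniteDimensional k E]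
    (Bf : E →ₗ[k] E →ₗ[k] k)
    (hnd_left : ∀ x : E, (∀ y : E, Bf x y = 0) → x = 0)
    (hnd_right : ∀ y : E, (∀ x : E, Bf x y = 0) → y = 0)
    (σ : E →ₗ[k] E) (hσ : ∀ x, σ (σ x) = x)
    (hσB : ∀ x y, Bf (σ x) (σ y) = Bf x y) :
    (∀ x : E, σ x = -x → (∀ y : E, σ y = -y → Bf x y = 0) → x = 0) ∧
    (∀ (N : ℕ) (X Xd : Fin N → E),
      (∀ i, σ (X i) = -(X i)) → (∀ i, σ (Xd i) = -(Xd i)) →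
      LinearIndependent k X →
      (∀ x : E, σ x = -x → x ∈ Submodule.span k (Set.range X)) →
      (∀ i j, Bf (Xd i) (X j) = if i = j then (1 : k) else 0) →
      ∀ (M : ℕ) (Y Yd : Fin M → E),
        LinearIndependent k Y →
        Submodule.span k (Set.range Y) = ⊤ →
        (∀ i j, Bf (Yd i) (Y j) = if i = j then (1 : k) else 0) →
        (2 : k) • (∑ i, (X i) ⊗ₜ[k] (Xd i) : E ⊗[k] E)
          = ∑ j, (Y j) ⊗ₜ[k] (Yd j) - ∑ j, (σ (Y j)) ⊗ₜ[k] (Yd j)) := by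
  -- orthogonality of eigenvectors
  have horth : ∀ u v : E, σ u = -u → σ v = v → Bf u v = 0 := by
    intro u v hu hv
    have h := hσB u v
    rw [hu, hv] at h
    simp only [map_neg, LinearMap.neg_apply] at h
    have h2 : (2 : k) * Bf u v = 0 := by linear_combination -h
    exact (mul_eq_zero.mp h2).resolve_left hchar
  constructor
  · intro x hx hxy
    refine hnd_left x fun y => ?_
    have h1 : Bf x (y - σ y) = 0 := by
      apply hxy; simp [map_sub, hσ y, neg_sub]
    have h2 : Bf x (y + σ y) = 0 := by
      apply horth _ _ hx; simp [map_add, hσ y, add_comm]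
    have h3 : (2 : k) * Bf x y = 0 := by
      have e1 : Bf x (y - σ y) = Bf x y - Bf x (σ y) := by simp
      have e2 : Bf x (y + σ y) = Bf x y + Bf x (σ y) := by simp
      rw [e1] at h1; rw [e2] at h2; linear_combination h1 + h2
    exact (mul_eq_zero.mp h3).resolve_left hchar
  · intro N X Xd hX hXd hXli hXspan hXdual M Y Yd hYli hYspan hYdual
    -- Bf as map to dual is bijective
    have hBinj : Function.Injective (Bf : E →ₗ[k] Module.Dual k E) := by
      intro a b hab
      have : a - b = 0 := by
        refine hnd_left _ fun z => ?_
        simp [map_sub, hab]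
      exact sub_eq_zero.mp this
    have hBsurj : Function.Surjective (Bf : E →ₗ[k] Module.Dual k E) :=
      (LinearMap.injective_iff_surjective_of_finrank_eq_finrank
        Subspace.dual_finrank_eq.symm).mp hBinj
    let e : E ≃ₗ[k] Module.Dual k E := LinearEquiv.ofBijective Bf ⟨hBinj, hBsurj⟩
    -- the injective map Φ : E ⊗ E → End E, a ⊗ b ↦ (z ↦ Bf b z • a)
    let Φ : E ⊗[k] E →ₗ[k] (E →ₗ[k] E) :=
      (dualTensorHom k E E) ∘ₗ (TensorProduct.map (Bf : E →ₗ[k] Module.Dual k E) LinearMap.id)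
        ∘ₗ (TensorProduct.comm k E E).toLinearMap
    have hΦtmul : ∀ (a b z : E), Φ (a ⊗ₜ[k] b) z = Bf b z • a := by
      intro a b z
      simp [Φ, dualTensorHom_apply]
    have hmapeq : TensorProduct.map (Bf : E →ₗ[k] Module.Dual k E) (LinearMap.id (M := E))
        = (TensorProduct.congr e (LinearEquiv.refl k E)).toLinearMap := by
      apply TensorProduct.ext'
      intro a b
      simp [e, TensorProduct.congr_tmul]; rfl
    have hdthinj : Function.Injective (dualTensorHom k E E) := by
      intro x y hxy
      have b0 := Module.Free.chooseBasis k E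
      have h1 := dualTensorHomEquivOfBasis_symm_cancel_left (N := E) b0 x
      have h2 := dualTensorHomEquivOfBasis_symm_cancel_left (N := E) b0 y
      rw [hxy] at h1
      rw [h2] at h1
      exact h1.symm
    have hΦinj : Function.Injective Φ := by
      have hcoe : ⇑Φ = ⇑(dualTensorHom k E E) ∘
          ⇑(TensorProduct.map (Bf : E →ₗ[k] Module.Dual k E) LinearMap.id) ∘
          ⇑(TensorProduct.comm k E E).toLinearMap := rfl
      rw [hcoe, hmapeq]
      simp only [LinearEquiv.coe_coe]
      exact hdthinj.comp (((TensorProduct.congr e (LinearEquiv.refl k E)).injective).comp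
        (TensorProduct.comm k E E).injective)
    apply hΦinj
    apply LinearMap.ext
    intro z
    -- decompose z
    obtain ⟨c, hc⟩ := Submodule.mem_span_range_iff_exists_fun k |>.mp
      (hXspan (z - σ z) (by simp [map_sub, hσ z, neg_sub]))
    obtain ⟨d, hd⟩ := Submodule.mem_span_range_iff_exists_fun k |>.mp
      (by rw [hYspan]; exact Submodule.mem_top : z ∈ Submodule.span k (Set.range Y))
    -- key coefficient computations
    have hXc : ∀ i, (2 : k) * Bf (Xd i) z = c i := by
      intro i
      have h1 : Bf (Xd i) (z - σ z) = c i := by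
        rw [← hc, map_sum]
        simp only [map_smul, smul_eq_mul, hXdual]
        rw [Finset.sum_eq_single i]
        · simp
        · intro j _ hj; simp [if_neg (Ne.symm hj)]
        · intro h; exact absurd (Finset.mem_univ i) h
      have h2 : Bf (Xd i) (z + σ z) = 0 := by
        apply horth _ _ (hXd i); simp [map_add, hσ z, add_comm]
      have e1 : Bf (Xd i) (z - σ z) = Bf (Xd i) z - Bf (Xd i) (σ z) := by simp
      have e2 : Bf (Xd i) (z + σ z) = Bf (Xd i) z + Bf (Xd i) (σ z) := by simp
      rw [e1] at h1; rw [e2] at h2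
      linear_combination h1 + h2
    have hYc : ∀ j, Bf (Yd j) z = d j := by
      intro j
      rw [← hd, map_sum]
      simp only [map_smul, smul_eq_mul, hYdual]
      rw [Finset.sum_eq_single j]
      · simp
      · intro i _ hi; simp [if_neg (Ne.symm hi)]
      · intro h; exact absurd (Finset.mem_univ j) h
    -- now compute both sides
    have hL : Φ ((2 : k) • (∑ i, (X i) ⊗ₜ[k] (Xd i) : E ⊗[k] E)) z = z - σ z := by
      rw [map_smul, map_sum]
      simp only [LinearMap.smul_apply, LinearMap.coe_sum, Finset.sum_apply]
      rw [Finset.smul_sum]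
      calc ∑ i, (2 : k) • (Φ (X i ⊗ₜ[k] Xd i)) z
          = ∑ i, c i • X i := by
            refine Finset.sum_congr rfl fun i _ => ?_
            rw [hΦtmul, smul_smul, hXc i]
        _ = z - σ z := hc
    have hR : Φ ((∑ j, (Y j) ⊗ₜ[k] (Yd j) : E ⊗[k] E) - ∑ j, (σ (Y j)) ⊗ₜ[k] (Yd j)) z
        = z - σ z := by
      rw [map_sub, map_sum, map_sum]
      simp only [LinearMap.sub_apply, LinearMap.coe_sum, Finset.sum_apply]
      have hA : ∑ j, (Φ (Y j ⊗ₜ[k] Yd j)) z = z := by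
        calc ∑ j, (Φ (Y j ⊗ₜ[k] Yd j)) z = ∑ j, d j • Y j := by
              refine Finset.sum_congr rfl fun j _ => ?_
              rw [hΦtmul, hYc j]
          _ = z := hd
      have hB : ∑ j, (Φ (σ (Y j) ⊗ₜ[k] Yd j)) z = σ z := by
        calc ∑ j, (Φ (σ (Y j) ⊗ₜ[k] Yd j)) z = ∑ j, d j • σ (Y j) := by
              refine Finset.sum_congr rfl fun j _ => ?_
              rw [hΦtmul, hYc j]
          _ = σ z := by rw [← hd, map_sum]; simp [map_smul]
      rw [hA, hB]
    rw [hL, hR]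
end

section
/- With the setup below, for all homogeneous u, v ∈ V: Σ_{X ∈ B_End} (−1)^{|X||u|} X†(u) ⊗ X^∨(v) = ν·Σ_{b ∈ B_A} Σ_{w ∈ B_V} (−1)^{|w|σ + σ} Φ(u, v·b) · (w ⊗ (w^∨·b^∨)) in V ⊗_k V. -/
/-- Parity of the `i`-th standard basis vector of `A^{m|n}`. -/
def pfin (m n : ℕ) (i : Fin (m + n)) : ZMod 2 := if (i : ℕ) < m then 0 else 1

/-- Right multiplication of a tuple by an algebra element. -/
def rmul {A : Type*} [Mul A] {ι : Type*} (v : ι → A) (a : A) : ι → A := fun i => v i * a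

/-- `v ∈ A^{m|n}` is homogeneous of parity `q`. -/
def homV {k A : Type*} [Field k] [Ring A] [Algebra k A]
    (𝒜 : ZMod 2 → Submodule k A) (m n : ℕ) (q : ZMod 2) (v : Fin (m + n) → A) : Prop :=
  ∀ i, v i ∈ 𝒜 (q + pfin m n i)

/-- The `k`-subspace of right `A`-linear endomorphisms of `A^{m|n}`. -/
def EndA (k A : Type*) [Field k] [Ring A] [Algebra k A] (m n : ℕ) :
    Submodule k ((Fin (m + n) → A) →ₗ[k] (Fin (m + n) → A)) where
  carrier := {X | ∀ (v : Fin (m + n) → A) (a : A), X (rmul v a) = rmul (X v) a}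
  add_mem' := by
    intro X Y hX hY v a
    funext i
    simp [LinearMap.add_apply, hX v a, hY v a, rmul, add_mul]
  zero_mem' := by
    intro v a
    funext i
    simp [rmul]
  smul_mem' := by
    intro c X hX v a
    funext i
    simp [LinearMap.smul_apply, hX v a, rmul, smul_mul_assoc]

/-- An endomorphism of `A^{m|n}` is homogeneous of parity `q`. -/
def homEnd {k A : Type*} [Field k] [Ring A] [Algebra k A]
    (𝒜 : ZMod 2 → Submodule k A) (m n : ℕ) (q : ZMod 2)
    (X : (Fin (m + n) → A) →ₗ[k] (Fin (m + n) → A)) : Prop :=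
  ∀ (p : ZMod 2) (v : Fin (m + n) → A), homV 𝒜 m n p v → homV 𝒜 m n (p + q) (X v)

/-- The supertrace of an endomorphism of `A^{m|n}` of parity `q`. -/
def strp {k A : Type*} [Field k] [Ring A] [Algebra k A] (m n : ℕ) (q : ZMod 2)
    (X : (Fin (m + n) → A) →ₗ[k] (Fin (m + n) → A)) : A :=
  (∑ i ∈ Finset.univ.filter (fun i : Fin (m + n) => (i : ℕ) < m), X (Pi.single i 1) i)
    - (-1 : k) ^ q.val •
      ∑ i ∈ Finset.univ.filter (fun i : Fin (m + n) => ¬ (i : ℕ) < m), X (Pi.single i 1) i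

open scoped TensorProduct

private lemma zmod2_em (a : ZMod 2) : a = 0 ∨ a = 1 := by revert a; decide

private lemma npm {k : Type*} [Ring k] (n : ℕ) : ((-1:k))^(n % 2) = (-1)^n := by
  conv_rhs => rw [← Nat.div_add_mod n 2]
  rw [pow_add, pow_mul]
  norm_num

private lemma L1 {k : Type*} [Ring k] (a b : ZMod 2) :
    ((-1:k))^(a.val * b.val) = (-1)^((a*b).val) := by
  rw [ZMod.val_mul, npm]

private lemma L2 {k : Type*} [Ring k] (a b : ZMod 2) :
    ((-1:k))^((a+b).val) = (-1)^a.val * (-1)^b.val := by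
  rw [ZMod.val_add, npm, pow_add]

private lemma L3 {k : Type*} [Ring k] (e : ℕ) : ((-1:k))^e * (-1)^e = 1 := by
  rw [← pow_add, ← two_mul, pow_mul]
  norm_num

private lemma zmod2_mul_self (x : ZMod 2) : x * x = x := by revert x; decide

private lemma zmod2_ne_add_one (x : ZMod 2) : x ≠ x + 1 := by revert x; decide

private lemma zmod2_univ (x : ZMod 2) : (Finset.univ : Finset (ZMod 2)) = {x, x+1} := by
  rcases zmod2_em x with rfl | rfl <;> decide

/-- With `V = A^{m|n}`, a nondegenerate `(ν,⋆)`-supersymmetric form `Φ` of parity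
`σ`, the adjoint map `†`, and dual homogeneous bases of `End_A(V)` and of `V`, for homogeneous
`u, v ∈ V`:
`Σ_{X ∈ B_End} (−1)^{|X||u|} X†(u) ⊗ X^∨(v)
  = ν Σ_{b ∈ B_A} Σ_{w ∈ B_V} (−1)^{|w|σ+σ} Φ(u, v·b) (w ⊗ (w^∨·b^∨))` in `V ⊗_k V`. -/
theorem stmt14 (k : Type*) [Field k] (hchar : (2 : k) ≠ 0)
    (A : Type*) [Ring A] [Algebra k A] [FiniteDimensional k A]
    (𝒜 : ZMod 2 → Submodule k A) [GradedAlgebra 𝒜]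
    (tr : A →ₗ[k] k)
    (heven : ∀ a ∈ 𝒜 1, tr a = 0)
    (hnd : ∀ x : A, (∀ y : A, tr (x * y) = 0) → x = 0)
    (hsymm : ∀ (p q : ZMod 2), ∀ x ∈ 𝒜 p, ∀ y ∈ 𝒜 q,
      tr (x * y) = (-1 : k) ^ (p.val * q.val) * tr (y * x))
    (st : A →ₗ[k] A)
    (hst_invol : ∀ a, st (st a) = a)
    (hst_grade : ∀ (p : ZMod 2), ∀ a ∈ 𝒜 p, st a ∈ 𝒜 p)
    (hst_mul : ∀ (p q : ZMod 2), ∀ x ∈ 𝒜 p, ∀ y ∈ 𝒜 q,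
      st (x * y) = ((-1 : k) ^ (p.val * q.val)) • (st y * st x))
    (hst_tr : ∀ a, tr (st a) = tr a)
    (ιA : Type*) [Fintype ιA] [DecidableEq ιA]
    (bA : Module.Basis ιA k A) (pA : ιA → ZMod 2) (hbA : ∀ i, bA i ∈ 𝒜 (pA i))
    (dA : ιA → A) (hdA : ∀ i, dA i ∈ 𝒜 (pA i))
    (hdualA : ∀ i j, tr (dA i * bA j) = if i = j then (1 : k) else 0)
    (m n : ℕ)
    (ι : Type*) [Fintype ι] [DecidableEq ι]
    (XE XdE : ι → ((Fin (m + n) → A) →ₗ[k] (Fin (m + n) → A)))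
    (pE : ι → ZMod 2)
    (hXE_A : ∀ i, XE i ∈ EndA k A m n) (hXdE_A : ∀ i, XdE i ∈ EndA k A m n)
    (hXE_hom : ∀ i, homEnd 𝒜 m n (pE i) (XE i))
    (hXdE_hom : ∀ i, homEnd 𝒜 m n (pE i) (XdE i))
    (hXE_li : LinearIndependent k XE)
    (hXE_span : Submodule.span k (Set.range XE) = EndA k A m n)
    (hndE : ∀ (p : ZMod 2) X, X ∈ EndA k A m n → homEnd 𝒜 m n p X →
      (∀ (q : ZMod 2) Y, Y ∈ EndA k A m n → homEnd 𝒜 m n q Y →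
        tr (strp m n (p + q) (X ∘ₗ Y)) = 0) → X = 0)
    (hdualE : ∀ i j, tr (strp m n (pE i + pE j) (XdE i ∘ₗ XE j))
      = if i = j then (1 : k) else 0)
    -- the form Φ
    (σp : ZMod 2) (ν : k) (hν : ν = 1 ∨ ν = -1)
    (Φ : (Fin (m + n) → A) →ₗ[k] (Fin (m + n) → A) →ₗ[k] k)
    (hΦpar : ∀ (p q : ZMod 2) u v, homV 𝒜 m n p u → homV 𝒜 m n q v →
      p + q ≠ σp → Φ u v = 0)
    (hΦnd : ∀ u, (∀ v, Φ u v = 0) → u = 0)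
    (hΦsymm : ∀ (p q : ZMod 2) u v, homV 𝒜 m n p u → homV 𝒜 m n q v →
      Φ u v = ν * (-1 : k) ^ (p.val * q.val) * Φ v u)
    (hΦsesq : ∀ (p q r : ZMod 2) u v, ∀ a ∈ 𝒜 r, homV 𝒜 m n p u → homV 𝒜 m n q v →
      Φ (rmul u a) v = (-1 : k) ^ (r.val * q.val) * Φ u (rmul v (st a)))
    -- the homogeneous basis B_V of V and its left dual basis with respect to Φ
    (ιV : Type*) [Fintype ιV] [DecidableEq ιV]
    (wV : ιV → (Fin (m + n) → A)) (pV : ιV → ZMod 2)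
    (hwV_hom : ∀ i, homV 𝒜 m n (pV i) (wV i))
    (hwV_li : LinearIndependent k wV)
    (hwV_span : Submodule.span k (Set.range wV) = ⊤)
    (wd : ιV → (Fin (m + n) → A))
    (hdualV : ∀ i j, Φ (wd i) (wV j) = if i = j then (1 : k) else 0)
    -- the adjoint map †
    (dag : ((Fin (m + n) → A) →ₗ[k] (Fin (m + n) → A)) →ₗ[k]
      ((Fin (m + n) → A) →ₗ[k] (Fin (m + n) → A)))
    (hdag_A : ∀ X ∈ EndA k A m n, dag X ∈ EndA k A m n)
    (hdag_hom : ∀ (p : ZMod 2) X, homEnd 𝒜 m n p X → homEnd 𝒜 m n p (dag X))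
    (hdag_adj : ∀ (p : ZMod 2) X, X ∈ EndA k A m n → homEnd 𝒜 m n p X →
      ∀ (q : ZMod 2) v, homV 𝒜 m n q v → ∀ w,
        Φ v (X w) = (-1 : k) ^ (p.val * q.val) * Φ (dag X v) w)
    -- the Ω-swap identity
    (hΩ : ∀ (pu pv : ZMod 2) (u v : Fin (m + n) → A),
      homV 𝒜 m n pu u → homV 𝒜 m n pv v →
      (∑ i, ((-1 : k) ^ ((pE i).val * pu.val)) • ((XE i u) ⊗ₜ[k] (XdE i v))
        : (Fin (m + n) → A) ⊗[k] (Fin (m + n) → A))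
      = ((-1 : k) ^ (pu.val * pv.val)) •
          ∑ b, ((-1 : k) ^ (pu.val * (pA b).val)) •
            ((rmul v (bA b)) ⊗ₜ[k] (rmul u (dA b)))) :
    ∀ (pu pv : ZMod 2) (u v : Fin (m + n) → A),
      homV 𝒜 m n pu u → homV 𝒜 m n pv v →
      (∑ i, ((-1 : k) ^ ((pE i).val * pu.val)) • ((dag (XE i) u) ⊗ₜ[k] (XdE i v))
        : (Fin (m + n) → A) ⊗[k] (Fin (m + n) → A))
      = ν • ∑ b, ∑ w,
          (((-1 : k) ^ ((pV w).val * σp.val + σp.val)) * Φ u (rmul v (bA b))) •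
            ((wV w) ⊗ₜ[k] (rmul (wd w) (dA b))) := by
  intro pu pv u v hu hv
  classical
  -- every element of A is the sum of its two graded components
  have hdecomp : ∀ (a : A) (x : ZMod 2),
      a = (DirectSum.decompose 𝒜 a x : A) + (DirectSum.decompose 𝒜 a (x+1) : A) := by
    intro a x
    have h1 : ∑ g : ZMod 2, ((DirectSum.decompose 𝒜 a) g : A) = a := by
      conv_rhs => rw [← DirectSum.sum_support_decompose 𝒜 a]
      exact (Finset.sum_subset (Finset.subset_univ _) (fun g _ hg => by
        simp [DFinsupp.notMem_support_iff.mp hg])).symm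
    rw [zmod2_univ x, Finset.sum_insert (by simp [zmod2_ne_add_one x]),
      Finset.sum_singleton] at h1
    exact h1.symm
  -- the basis of V given by wV
  let bV : Module.Basis ιV k (Fin (m+n) → A) := Module.Basis.mk hwV_li hwV_span.ge
  have hexp : ∀ x : Fin (m+n) → A, ∑ w, Φ (wd w) x • wV w = x := by
    intro x
    have hrepr : ∀ w, Φ (wd w) x = bV.repr x w := by
      intro w
      conv_lhs => rw [← bV.sum_repr x]
      simp [Module.Basis.mk_apply, bV, hdualV]
    calc ∑ w, Φ (wd w) x • wV w = ∑ w, bV.repr x w • bV w := by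
          refine Finset.sum_congr rfl fun w _ => ?_
          rw [hrepr w, Module.Basis.mk_apply]
      _ = x := bV.sum_repr x
  -- homogeneity of rmul
  have hrmul_hom : ∀ (p r : ZMod 2) (x : Fin (m+n) → A) (a : A),
      homV 𝒜 m n p x → a ∈ 𝒜 r → homV 𝒜 m n (p + r) (rmul x a) := by
    intro p r x a hx ha j
    have h1 : x j * a ∈ 𝒜 ((p + pfin m n j) + r) := SetLike.mul_mem_graded (hx j) ha
    have h2 : (p + pfin m n j) + r = (p + r) + pfin m n j := by ring
    rw [h2] at h1
    exact h1
  -- the dual basis vectors wd are homogeneous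
  have hwd_hom : ∀ w, homV 𝒜 m n (pV w + σp) (wd w) := by
    intro w
    set g : Fin (m+n) → A :=
      fun j => (DirectSum.decompose 𝒜 (wd w j) ((pV w + σp) + pfin m n j) : A) with hgdef
    set bd : Fin (m+n) → A :=
      fun j => (DirectSum.decompose 𝒜 (wd w j) ((pV w + σp) + pfin m n j + 1) : A) with hbdef
    have hsplit : wd w = g + bd := by
      funext j
      exact hdecomp (wd w j) ((pV w + σp) + pfin m n j)
    have hg_hom : homV 𝒜 m n (pV w + σp) g := fun j => SetLike.coe_mem _
    have hbd_hom : homV 𝒜 m n (pV w + σp + 1) bd := by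
      intro j
      show bd j ∈ 𝒜 (pV w + σp + 1 + pfin m n j)
      have h2 : pV w + σp + 1 + pfin m n j = (pV w + σp) + pfin m n j + 1 := by ring
      rw [h2]
      exact SetLike.coe_mem _
    have hpair : ∀ j, Φ bd (wV j) = 0 := by
      intro j
      by_cases hp : (pV w + σp + 1) + pV j = σp
      · have hne : w ≠ j := by
          intro h
          rw [← h] at hp
          exact (by revert hp; generalize pV w = a; generalize σp = s; revert a s; decide :
            ¬ ((pV w + σp + 1) + pV w = σp)) hp
        have h1 : Φ (wd w) (wV j) = 0 := by rw [hdualV]; simp [hne]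
        have h2 : Φ g (wV j) = 0 := by
          apply hΦpar (pV w + σp) (pV j) _ _ hg_hom (hwV_hom j)
          intro hq
          exact (by revert hp hq; generalize pV w = a; generalize σp = s; generalize pV j = b
                    revert a s b; decide :
            ¬ ((pV w + σp + 1) + pV j = σp ∧ (pV w + σp) + pV j = σp)) ⟨hp, hq⟩
        have h3 : Φ (wd w) (wV j) = Φ g (wV j) + Φ bd (wV j) := by
          rw [hsplit, map_add, LinearMap.add_apply]
        rw [h1, h2, zero_add] at h3
        exact h3.symm
      · exact hΦpar _ _ _ _ hbd_hom (hwV_hom j) hp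
    have hbd0 : bd = 0 := by
      apply hΦnd
      intro x
      rw [← hexp x, map_sum]
      simp [hpair]
    intro j
    have hj : wd w j = g j := by rw [hsplit, hbd0]; simp
    rw [hj]
    exact hg_hom j
  -- combining ⋆-symmetry and adjointness
  have hΦdag : ∀ (i : ι) (w : ιV), Φ (wd w) (dag (XE i) u)
      = ν * (-1:k)^((pV w + σp).val * (pu + pE i).val)
        * ((-1:k)^((pE i).val * pu.val) * Φ u (XE i (wd w))) := by
    intro i w
    have hsymmi := hΦsymm (pV w + σp) (pu + pE i) (wd w) (dag (XE i) u)
      (hwd_hom w) (hdag_hom (pE i) (XE i) (hXE_hom i) pu u hu)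
    have hadj := hdag_adj (pE i) (XE i) (hXE_A i) (hXE_hom i) pu u hu (wd w)
    have hinv : Φ (dag (XE i) u) (wd w)
        = (-1:k)^((pE i).val * pu.val) * Φ u (XE i (wd w)) := by
      rw [hadj, ← mul_assoc, L3, one_mul]
    rw [hsymmi, hinv]
  -- the per-w identity obtained from the Ω-swap
  have hmain : ∀ w : ιV,
      (∑ i, (((-1:k)^((pE i).val * pu.val)) * Φ (wd w) (dag (XE i) u)) •
          ((wV w) ⊗ₜ[k] (XdE i v)))
      = ∑ b, (ν * (-1:k)^(((pV w + σp) * (pu + pv + pA b)).val) * Φ u (rmul v (bA b))) •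
          ((wV w) ⊗ₜ[k] (rmul (wd w) (dA b))) := by
    intro w
    have hΩw := congrArg (LinearMap.rTensor (Fin (m+n) → A) ((Φ u).smulRight (wV w)))
      (hΩ (pV w + σp) pv (wd w) v (hwd_hom w) hv)
    simp only [map_sum, map_smul, LinearMap.rTensor_tmul, LinearMap.smulRight_apply,
      ← TensorProduct.smul_tmul', smul_smul] at hΩw
    calc (∑ i, (((-1:k)^((pE i).val * pu.val)) * Φ (wd w) (dag (XE i) u)) •
            ((wV w) ⊗ₜ[k] (XdE i v)))
        = (ν * (-1:k)^(((pV w + σp) * pu).val)) •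
            ∑ i, (((-1:k)^((pE i).val * (pV w + σp).val)) * Φ u (XE i (wd w))) •
              ((wV w) ⊗ₜ[k] (XdE i v)) := by
          rw [Finset.smul_sum]
          refine Finset.sum_congr rfl fun i _ => ?_
          rw [hΦdag i w, smul_smul]
          congr 1
          have e1 : ((-1:k))^((pV w + σp).val * (pu + pE i).val)
              = (-1)^(((pV w + σp) * pu).val) * (-1)^((pE i).val * (pV w + σp).val) := by
            rw [L1, mul_add, L2, ← L1 (pV w + σp) (pE i), mul_comm (pV w + σp).val (pE i).val]
          rw [e1]
          have e2 := L3 (k := k) ((pE i).val * pu.val)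
          calc (-1:k)^((pE i).val * pu.val) *
                (ν * ((-1)^(((pV w + σp) * pu).val) * (-1)^((pE i).val * (pV w + σp).val)) *
                  ((-1)^((pE i).val * pu.val) * Φ u (XE i (wd w))))
              = ((-1:k)^((pE i).val * pu.val) * (-1)^((pE i).val * pu.val)) *
                (ν * (-1)^(((pV w + σp) * pu).val) *
                  ((-1)^((pE i).val * (pV w + σp).val) * Φ u (XE i (wd w)))) := by ring
            _ = ν * (-1:k)^(((pV w + σp) * pu).val) *
                  ((-1)^((pE i).val * (pV w + σp).val) * Φ u (XE i (wd w))) := by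
                rw [e2, one_mul]
      _ = (ν * (-1:k)^(((pV w + σp) * pu).val)) •
            (((-1:k)^((pV w + σp).val * pv.val)) •
              ∑ b, (((-1:k)^((pV w + σp).val * (pA b).val)) * Φ u (rmul v (bA b))) •
                ((wV w) ⊗ₜ[k] (rmul (wd w) (dA b)))) := by rw [hΩw]
      _ = ∑ b, (ν * (-1:k)^(((pV w + σp) * (pu + pv + pA b)).val) * Φ u (rmul v (bA b))) •
            ((wV w) ⊗ₜ[k] (rmul (wd w) (dA b))) := by
          rw [smul_smul, Finset.smul_sum]
          refine Finset.sum_congr rfl fun b _ => ?_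
          rw [smul_smul]
          congr 1
          have e3 : ((-1:k))^(((pV w + σp) * (pu + pv + pA b)).val)
              = (-1)^(((pV w + σp) * pu).val) *
                  ((-1)^(((pV w + σp) * pv).val) * (-1)^(((pV w + σp) * (pA b)).val)) := by
            rw [mul_add, L2, mul_add, L2, mul_assoc]
          rw [e3, ← L1 (pV w + σp) pv, ← L1 (pV w + σp) (pA b)]
          ring
  -- put everything together
  calc (∑ i, ((-1 : k) ^ ((pE i).val * pu.val)) • ((dag (XE i) u) ⊗ₜ[k] (XdE i v)))
      = ∑ i, ∑ w, (((-1:k)^((pE i).val * pu.val)) * Φ (wd w) (dag (XE i) u)) •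
          ((wV w) ⊗ₜ[k] (XdE i v)) := by
        refine Finset.sum_congr rfl fun i _ => ?_
        conv_lhs => rw [← hexp (dag (XE i) u)]
        rw [TensorProduct.sum_tmul, Finset.smul_sum]
        refine Finset.sum_congr rfl fun w _ => ?_
        rw [← TensorProduct.smul_tmul', smul_smul]
    _ = ∑ w, ∑ i, (((-1:k)^((pE i).val * pu.val)) * Φ (wd w) (dag (XE i) u)) •
          ((wV w) ⊗ₜ[k] (XdE i v)) := Finset.sum_comm
    _ = ∑ w, ∑ b, (ν * (-1:k)^(((pV w + σp) * (pu + pv + pA b)).val) * Φ u (rmul v (bA b))) •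
          ((wV w) ⊗ₜ[k] (rmul (wd w) (dA b))) := Finset.sum_congr rfl fun w _ => hmain w
    _ = ∑ b, ∑ w, (ν * (-1:k)^(((pV w + σp) * (pu + pv + pA b)).val) * Φ u (rmul v (bA b))) •
          ((wV w) ⊗ₜ[k] (rmul (wd w) (dA b))) := Finset.sum_comm
    _ = ν • ∑ b, ∑ w,
          (((-1 : k) ^ ((pV w).val * σp.val + σp.val)) * Φ u (rmul v (bA b))) •
            ((wV w) ⊗ₜ[k] (rmul (wd w) (dA b))) := by
        rw [Finset.smul_sum]
        refine Finset.sum_congr rfl fun b _ => ?_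
        rw [Finset.smul_sum]
        refine Finset.sum_congr rfl fun w _ => ?_
        rw [smul_smul]
        congr 1
        by_cases h : pu + pv + pA b = σp
        · have he : (pV w + σp) * (pu + pv + pA b) = pV w * σp + σp := by
            rw [h, add_mul, zmod2_mul_self]
          rw [he, L2, ← L1, ← pow_add, mul_assoc]
        · have h0 : Φ u (rmul v (bA b)) = 0 := by
            apply hΦpar pu (pv + pA b) u _ hu (hrmul_hom pv (pA b) v (bA b) hv (hbA b))
            rw [← add_assoc]
            exact h
          rw [h0]
          ring
end
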